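/- Let k ≥ 2 and A ⊆ ℕ with r_{1,k}(A,n) = r_{1,k}(ℕ∖A,n) for all sufficiently large n. Then r_{1,k}(A,n) ≥ 1 for all sufficiently large n. -/

import Mathlib

noncomputable def weightedRep (A : Set ℕ) (k n : ℕ) : ℕ :=
  {p : ℕ × ℕ | p.1 ∈ A ∧ p.2 ∈ A ∧ n = p.1 + k * p.2}.ncard

namespace Stmt4Aux

section Core
variable {k M0 : ℕ} (w : ℕ → Bool)


open Finset in
lemma wr_card (A : Set ℕ) [DecidablePred (· ∈ A)] (k n : ℕ) (hk : 1 ≤ k) :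
    ({p : ℕ × ℕ | p.1 ∈ A ∧ p.2 ∈ A ∧ n = p.1 + k * p.2}).ncard
      = ((range (n / k + 1)).filter (fun b => n - k * b ∈ A ∧ b ∈ A)).card := by
  have hk0 : 0 < k := hk
  have hinj : Function.Injective (fun b : ℕ => (n - k * b, b)) := by
    intro a b h
    simpa using congrArg Prod.snd h
  have hset : {p : ℕ × ℕ | p.1 ∈ A ∧ p.2 ∈ A ∧ n = p.1 + k * p.2}
      = (fun b : ℕ => (n - k * b, b)) ''
        ↑((range (n / k + 1)).filter (fun b => n - k * b ∈ A ∧ b ∈ A)) := by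
    ext ⟨a, b⟩
    simp only [Set.mem_setOf_eq, Set.mem_image, coe_filter, mem_range, Set.mem_setOf_eq,
      Prod.mk.injEq]
    constructor
    · rintro ⟨ha, hb, hn⟩
      refine ⟨b, ⟨?_, ?_, hb⟩, ?_, rfl⟩
      · have : k * b ≤ n := by omega
        have : b ≤ n / k := (Nat.le_div_iff_mul_le hk0).2 (by rw [mul_comm]; omega)
        omega
      · have : n - k * b = a := by omega
        rw [this]; exact ha
      · omega
    · rintro ⟨b', ⟨hb1, hb2, hb3⟩, h1, h2⟩
      subst h2
      have hkb : k * b' ≤ n := by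
        have : b' ≤ n / k := by omega
        have := (Nat.le_div_iff_mul_le hk0).1 this
        rw [mul_comm] at this
        omega
      subst h1
      exact ⟨hb2, hb3, by omega⟩
  rw [hset, Set.ncard_image_of_injective _ hinj, Set.ncard_coe_finset]


open Finset in
lemma key_identity (A : Set ℕ) [DecidablePred (· ∈ A)] [DecidablePred (· ∈ Aᶜ)] (k n : ℕ)
    (h : ((range (n / k + 1)).filter (fun b => n - k * b ∈ A ∧ b ∈ A)).card
       = ((range (n / k + 1)).filter (fun b => n - k * b ∈ Aᶜ ∧ b ∈ Aᶜ)).card) :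
    ((range (n / k + 1)).filter (fun b => b ∈ A)).card
      + ((range (n / k + 1)).filter (fun b => n - k * b ∈ A)).card
      = n / k + 1 := by
  have key : ∀ b : ℕ,
      (if (n - k * b ∈ A ∧ b ∈ A) then 1 else 0) + 1
        = (if (n - k * b ∈ Aᶜ ∧ b ∈ Aᶜ) then 1 else 0)
          + ((if b ∈ A then 1 else 0) + (if n - k * b ∈ A then 1 else 0)) := by
    intro b
    by_cases h1 : n - k * b ∈ A <;> by_cases h2 : b ∈ A <;>
      simp [h1, h2, Set.mem_compl_iff]
  have hsum := Finset.sum_congr rfl (fun b (_ : b ∈ range (n / k + 1)) => key b)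
  rw [Finset.sum_add_distrib, Finset.sum_add_distrib, Finset.sum_add_distrib,
    Finset.sum_const, Finset.card_range] at hsum
  rw [← Finset.card_filter, ← Finset.card_filter, ← Finset.card_filter,
    ← Finset.card_filter] at hsum
  rw [h] at hsum
  simp only [smul_eq_mul, mul_one] at hsum
  omega

open Finset in
lemma step_identity (A : Set ℕ) [DecidablePred (· ∈ A)] (k n : ℕ) (hk : 1 ≤ k)
    (e1 : ((range (n / k + 1)).filter (fun b => b ∈ A)).card
      + ((range (n / k + 1)).filter (fun b => n - k * b ∈ A)).card = n / k + 1)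
    (e2 : ((range ((n+k) / k + 1)).filter (fun b => b ∈ A)).card
      + ((range ((n+k) / k + 1)).filter (fun b => n + k - k * b ∈ A)).card = (n+k) / k + 1) :
    ((n + k ∈ A) ↔ ¬ (n / k + 1 ∈ A)) := by
  have hk0 : 0 < k := hk
  have hdiv : (n + k) / k = n / k + 1 := Nat.add_div_right n hk0
  rw [hdiv] at e2
  -- split first card
  have c1 : ((range (n / k + 1 + 1)).filter (fun b => b ∈ A)).card
      = ((range (n / k + 1)).filter (fun b => b ∈ A)).card
        + (if n / k + 1 ∈ A then 1 else 0) := by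
    rw [Finset.card_filter, Finset.card_filter, Finset.sum_range_succ]
  -- split second card
  have c2 : ((range (n / k + 1 + 1)).filter (fun b => n + k - k * b ∈ A)).card
      = (if n + k ∈ A then 1 else 0)
        + ((range (n / k + 1)).filter (fun b => n - k * b ∈ A)).card := by
    rw [Finset.card_filter, Finset.card_filter, Finset.sum_range_succ']
    have : ∀ b ∈ range (n / k + 1),
        (if n + k - k * (b + 1) ∈ A then 1 else 0) = (if n - k * b ∈ A then 1 else 0) := by
      intro b _
      have : n + k - k * (b + 1) = n - k * b := by
        have : k * (b + 1) = k * b + k := by ring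
        omega
      rw [this]
    rw [Finset.sum_congr rfl this]
    simp [add_comm]
  rw [c1, c2] at e2
  by_cases h1 : n / k + 1 ∈ A <;> by_cases h2 : n + k ∈ A <;>
    simp [h1, h2] at e2 ⊢ <;> omega





lemma bool_resolve {a b c : Bool} (h1 : a = !b) (h2 : a = !c) : b = c :=
  Bool.not_inj (h1.symm.trans h2)

lemma xor_not_left' (a b : Bool) : (!a).xor b = !(a.xor b) := by
  cases a <;> cases b <;> rfl

lemma xor_cancel' {a b c : Bool} (h : a.xor b = a.xor c) : b = c := by
  cases a <;> cases b <;> cases c <;> simp_all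

lemma chain1 (hk : 2 ≤ k) (H1 : ∀ m, M0 ≤ m → w m = !w (m / k)) :
    ∀ t x, M0 ≤ x → w (k ^ t * x) = (Nat.bodd t).xor (w x) := by
  intro t
  induction t with
  | zero => intro x hx; simp
  | succ t ih =>
    intro x hx
    have hk0 : 0 < k := by omega
    have hm : k ^ (t + 1) * x = k * (k ^ t * x) := by ring
    have hge : M0 ≤ k * (k ^ t * x) := by
      calc M0 ≤ x := hx
      _ ≤ k ^ t * x := Nat.le_mul_of_pos_left x (Nat.pow_pos (n := t) hk0)
      _ ≤ k * (k ^ t * x) := Nat.le_mul_of_pos_left _ hk0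
    have hdiv : (k * (k ^ t * x)) / k = k ^ t * x := Nat.mul_div_cancel_left _ hk0
    rw [hm, H1 _ hge, hdiv, ih x hx, Nat.bodd_succ, xor_not_left']

lemma chain2 (hk : 2 ≤ k) (H1 : ∀ m, M0 ≤ m → w m = !w (m / k)) :
    ∀ t c, M0 + 1 ≤ c → w (k ^ t * c - 1) = (Nat.bodd t).xor (w (c - 1)) := by
  intro t
  induction t with
  | zero => intro c hc; simp
  | succ t ih =>
    intro c hc
    have hk0 : 0 < k := by omega
    have hX : 1 ≤ k ^ t * c := Nat.mul_pos (Nat.pow_pos (n := t) hk0) (by omega)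
    have hcX : c ≤ k ^ t * c := Nat.le_mul_of_pos_left c (Nat.pow_pos (n := t) hk0)
    have hmul : k * (k ^ t * c) = k ^ (t+1) * c := by ring
    have hm : k ^ (t + 1) * c - 1 = k * (k ^ t * c - 1) + (k - 1) := by
      have h2 : k * (k ^ t * c - 1) + k * 1 = k * (k ^ t * c) := by
        rw [← Nat.mul_add]; congr 1; omega
      omega
    have hdiv : (k * (k ^ t * c - 1) + (k - 1)) / k = k ^ t * c - 1 := by
      rw [Nat.mul_add_div hk0, Nat.div_eq_of_lt (show k - 1 < k by omega)]
      omega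
    have hge : M0 ≤ k * (k ^ t * c - 1) + (k - 1) := by
      have h3 : k ^ t * c - 1 ≤ k * (k ^ t * c - 1) := Nat.le_mul_of_pos_left _ hk0
      omega
    rw [hm, H1 _ hge, hdiv, ih c hc, Nat.bodd_succ, xor_not_left']

lemma reflw {q r : ℕ} (hk : 2 ≤ k) (hr : r < k)
    (H1 : ∀ m, M0 ≤ m → w m = !w (m / k))
    (Refl : ∀ j, j ≤ q → w (r + k * j) = !w (q - j)) :
    ∀ j, M0 ≤ j → j ≤ q → w j = w (q - j) := by
  intro j hj hjq
  have hk0 : 0 < k := by omega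
  have hge : M0 ≤ r + k * j := by
    have : j ≤ k * j := Nat.le_mul_of_pos_left j hk0
    omega
  have hdiv : (r + k * j) / k = j := by
    rw [Nat.add_mul_div_left _ _ hk0, Nat.div_eq_of_lt hr, Nat.zero_add]
  have h1 := H1 _ hge
  rw [hdiv] at h1
  have h2 := Refl j hjq
  rw [h1] at h2
  exact Bool.not_inj h2

lemma lift {q r : ℕ} (hk : 2 ≤ k) (hr : r < k)
    (H1 : ∀ m, M0 ≤ m → w m = !w (m / k))
    (Refl : ∀ j, j ≤ q → w (r + k * j) = !w (q - j)) :
    ∀ t x, k ^ t ∣ q + 1 → M0 ≤ x → x + M0 + 1 ≤ (q + 1) / k ^ t →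
      w x = w ((q + 1) / k ^ t - 1 - x) := by
  intro t x hdvd hx hxy
  have hk0 : 0 < k := by omega
  have hkt : 0 < k ^ t := Nat.pow_pos (n := t) hk0
  set y := (q + 1) / k ^ t with hy
  have hqy : q + 1 = k ^ t * y := (Nat.mul_div_cancel' hdvd).symm
  have hxly : x < y := by omega
  have hjq : k ^ t * x ≤ q := by
    have : k ^ t * x < k ^ t * y := mul_lt_mul_of_pos_left hxly hkt
    omega
  have hjM : M0 ≤ k ^ t * x := le_trans hx (Nat.le_mul_of_pos_left x hkt)
  have h1 := reflw w hk hr H1 Refl (k ^ t * x) hjM hjq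
  have h2 := chain1 w hk H1 t x hx
  have h5 : k ^ t * (y - x) + k ^ t * x = k ^ t * y := by
    rw [← Nat.mul_add]; congr 1; omega
  have h6 : q - k ^ t * x = k ^ t * (y - x) - 1 := by omega
  have h3 := chain2 w hk H1 t (y - x) (by omega)
  have h7 : y - x - 1 = y - 1 - x := by omega
  rw [h6, h3, h7] at h1
  rw [h2] at h1
  exact xor_cancel' h1


lemma goodCase (hk : 2 ≤ k) (hM : 1 ≤ M0)
    (H1 : ∀ m, M0 ≤ m → w m = !w (m / k))
    (Z : ℕ) (hZB : 2 * k ^ 2 * (M0 + 3) ≤ Z) (hZmod : ¬ k ∣ Z + 1)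
    (reflZ : ∀ x, M0 ≤ x → x + M0 + 1 ≤ Z + 1 → w x = w (Z - x)) : False := by
  have hk0 : 0 < k := by omega
  set Z₁ := Z / k with hZ₁
  set d := Z % k with hd'
  have hZeq : k * Z₁ + d = Z := Nat.div_add_mod Z k
  have hd : d < k := Nat.mod_lt _ hk0
  have hd2 : d + 2 ≤ k := by
    by_contra hcon
    exact hZmod ⟨Z₁ + 1, by rw [Nat.mul_succ]; omega⟩
  have hcond : ∀ t, t ≤ k * M0 + 1 → k * t + k + M0 + 1 ≤ Z := by
    intro t ht
    have h1 : k * t ≤ k * (k * M0 + 1) := Nat.mul_le_mul_left k ht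
    have h2 : k * (k * M0 + 1) = k * k * M0 + k := by ring
    have h3 : 2 * k ^ 2 * (M0 + 3) = 2 * (k * k * M0) + 6 * (k * k) := by ring
    have h4 : k ≤ k * k := Nat.le_mul_of_pos_left k hk0
    have h5 : M0 ≤ k * k * M0 := Nat.le_mul_of_pos_left M0 (by positivity)
    omega
  have halfA : ∀ t, M0 ≤ t → k * t + k + M0 + 1 ≤ Z → w t = w (Z₁ - t) := by
    intro t ht hcnd
    have hjM : M0 ≤ k * t := le_trans ht (Nat.le_mul_of_pos_left t hk0)
    have hj1 : w (k * t) = !w t := by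
      have := H1 (k * t) hjM
      rwa [Nat.mul_div_cancel_left t hk0] at this
    have hr1 : w (k * t) = w (Z - k * t) := reflZ (k * t) hjM (by omega)
    have ht1 : t ≤ Z₁ := (Nat.le_div_iff_mul_le hk0).2 (by rw [mul_comm]; omega)
    have h6 : k * (Z₁ - t) + k * t = k * Z₁ := by rw [← Nat.mul_add]; congr 1; omega
    have h7 : Z - k * t = k * (Z₁ - t) + d := by omega
    have hj2 : w (Z - k * t) = !w (Z₁ - t) := by
      have hge : M0 ≤ Z - k * t := by omega
      have := H1 _ hge
      rwa [h7, Nat.mul_add_div hk0, Nat.div_eq_of_lt hd, Nat.add_zero, ← h7] at this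
    exact bool_resolve hj1 (hr1.trans hj2)
  have halfB : ∀ t, M0 ≤ t → k * t + k + M0 + 1 ≤ Z → w t = w (Z₁ - (t + 1)) := by
    intro t ht hcnd
    have hjM : M0 ≤ k * t + (k - 1) := by
      have : t ≤ k * t := Nat.le_mul_of_pos_left t hk0
      omega
    have hj1 : w (k * t + (k - 1)) = !w t := by
      have := H1 (k * t + (k - 1)) hjM
      rwa [Nat.mul_add_div hk0, Nat.div_eq_of_lt (show k - 1 < k by omega),
        Nat.add_zero] at this
    have hr1 : w (k * t + (k - 1)) = w (Z - (k * t + (k - 1))) :=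
      reflZ (k * t + (k - 1)) hjM (by omega)
    have h9 : k * (t + 1) = k * t + k := Nat.mul_succ k t
    have ht1 : t + 1 ≤ Z₁ := (Nat.le_div_iff_mul_le hk0).2 (by rw [mul_comm]; omega)
    have h6 : k * (Z₁ - (t + 1)) + k * (t + 1) = k * Z₁ := by
      rw [← Nat.mul_add]; congr 1; omega
    have h7 : Z - (k * t + (k - 1)) = k * (Z₁ - (t + 1)) + (d + 1) := by omega
    have hj2 : w (Z - (k * t + (k - 1))) = !w (Z₁ - (t + 1)) := by
      have hge : M0 ≤ Z - (k * t + (k - 1)) := by omega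
      have := H1 _ hge
      rwa [h7, Nat.mul_add_div hk0, Nat.div_eq_of_lt (show d + 1 < k by omega),
        Nat.add_zero, ← h7] at this
    exact bool_resolve hj1 (hr1.trans hj2)
  have const : ∀ t, M0 ≤ t → t ≤ k * M0 → w t = w M0 := by
    intro t ht
    induction t, ht using Nat.le_induction with
    | base => intro _; rfl
    | succ n hn ih =>
      intro hle
      have e1 := halfA (n + 1) (by omega) (hcond (n + 1) (by omega))
      have e2 := halfB n hn (hcond n (by omega))
      rw [e1, ← e2]
      exact ih (by omega)
  have hMk : M0 ≤ k * M0 := Nat.le_mul_of_pos_left M0 hk0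
  have hfin1 : w (k * M0) = w M0 := const (k * M0) hMk le_rfl
  have hfin2 : w (k * M0) = !w M0 := by
    have := H1 (k * M0) hMk
    rwa [Nat.mul_div_cancel_left M0 hk0] at this
  rw [hfin1] at hfin2
  exact absurd hfin2 (by cases w M0 <;> simp)

lemma stuckCase (hk : 2 ≤ k) (hM : 1 ≤ M0) {q r : ℕ} (hr : r < k)
    (H1 : ∀ m, M0 ≤ m → w m = !w (m / k))
    (Refl : ∀ j, j ≤ q → w (r + k * j) = !w (q - j))
    (hdvd : k ^ (M0 + 2) ∣ q + 1)
    (hq : k ^ (M0 + 2) * (2 * k ^ 2 * (M0 + 3) + 2) ≤ q + 1) : False := by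
  have hk0 : 0 < k := by omega
  set y : ℕ → ℕ := fun t => (q + 1) / k ^ t with hy
  have hdt : ∀ t, t ≤ M0 + 2 → k ^ t ∣ q + 1 :=
    fun t ht => dvd_trans (pow_dvd_pow k ht) hdvd
  have hqy : ∀ t, t ≤ M0 + 2 → q + 1 = k ^ t * y t :=
    fun t ht => (Nat.mul_div_cancel' (hdt t ht)).symm
  have hBexp : 2 * k ^ 2 * (M0 + 3) = 2 * (k * k) * M0 + 6 * (k * k) := by ring
  have hkk : k ≤ k * k := Nat.le_mul_of_pos_left k hk0
  have hyD : 2 * k ^ 2 * (M0 + 3) + 2 ≤ y (M0 + 2) :=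
    (Nat.le_div_iff_mul_le (Nat.pow_pos hk0)).2 (by rw [mul_comm]; exact hq)
  have hyge : ∀ t, t ≤ M0 + 2 → y (M0 + 2) ≤ y t := by
    intro t ht
    exact Nat.div_le_div_left (Nat.pow_le_pow_right hk0 ht) (Nat.pow_pos hk0)
  have hybig : ∀ t, t ≤ M0 + 2 → M0 + 3 ≤ y t := by
    intro t ht
    have := hyge t ht
    have hM0kk : M0 + 1 ≤ 2 * (k * k) * M0 + 6 * (k * k) := by nlinarith
    omega
  have hyt : ∀ t, t + 1 ≤ M0 + 2 → y t = k * y (t + 1) := by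
    intro t ht
    have h1 := hqy t (by omega)
    have h2 := hqy (t + 1) (by omega)
    have h3 : k ^ (t + 1) * y (t + 1) = k ^ t * (k * y (t + 1)) := by ring
    rw [h3] at h2
    exact Nat.eq_of_mul_eq_mul_left (Nat.pow_pos hk0) (h1.symm.trans h2)
  -- (ii)
  have wpred : ∀ t, t + 1 ≤ M0 + 2 → w (y t - 2) = !w (y (t + 1) - 1) := by
    intro t ht
    have h1 := hyt t ht
    have hyb := hybig (t + 1) (by omega)
    have hyb' := hybig t (by omega)
    have h6 : k * (y (t + 1) - 1) + k * 1 = k * y (t + 1) := by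
      rw [← Nat.mul_add]; congr 1; omega
    have h7 : y t - 2 = k * (y (t + 1) - 1) + (k - 2) := by omega
    have hge : M0 ≤ y t - 2 := by omega
    have := H1 _ hge
    rwa [h7, Nat.mul_add_div hk0, Nat.div_eq_of_lt (show k - 2 < k by omega),
      Nat.add_zero, ← h7] at this
  -- (i)
  have wZ : ∀ t, t + 1 ≤ M0 + 2 → w (y t - 1) = !w (y (t + 1) - 1) := by
    intro t ht
    have h1 := hyt t ht
    have hyb := hybig (t + 1) (by omega)
    have hyb' := hybig t (by omega)
    have h6 : k * (y (t + 1) - 1) + k * 1 = k * y (t + 1) := by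
      rw [← Nat.mul_add]; congr 1; omega
    have h7 : y t - 1 = k * (y (t + 1) - 1) + (k - 1) := by omega
    have hge : M0 ≤ y t - 1 := by omega
    have := H1 _ hge
    rwa [h7, Nat.mul_add_div hk0, Nat.div_eq_of_lt (show k - 1 < k by omega),
      Nat.add_zero, ← h7] at this
  -- (iii)
  have hkM : M0 ≤ k ^ M0 := le_of_lt (Nat.lt_pow_self (n := M0) (a := k) (by omega))
  have wtop : ∀ i, i ≤ 1 →
      w (y (M0 + i) - 2) = (Nat.bodd (M0 + i)).xor ((Nat.bodd i).xor (w (k ^ M0))) := by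
    intro i hi
    have hti : M0 + i ≤ M0 + 2 := by omega
    have hjkD : k ^ (M0 + i) ≤ k ^ (M0 + 2) := Nat.pow_le_pow_right hk0 (by omega)
    have h2D : k ^ (M0 + 2) * 2 ≤ q + 1 :=
      le_trans (Nat.mul_le_mul_left _ (by omega)) hq
    have hkD1 : 1 ≤ k ^ (M0 + 2) := Nat.pow_pos hk0
    have hjq : k ^ (M0 + i) ≤ q := by omega
    have hw1 : w (k ^ (M0 + i)) = (Nat.bodd i).xor (w (k ^ M0)) := by
      have hsplit : k ^ (M0 + i) = k ^ i * k ^ M0 := by rw [← pow_add, add_comm]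
      rw [hsplit]
      exact chain1 w hk H1 i (k ^ M0) hkM
    have hyb : M0 + 3 ≤ y (M0 + i) := hybig _ hti
    have hq1 := hqy (M0 + i) hti
    have h5 : k ^ (M0 + i) * (y (M0 + i) - 1) + k ^ (M0 + i) * 1 = k ^ (M0 + i) * y (M0 + i) := by
      rw [← Nat.mul_add]; congr 1; omega
    have h6 : q - k ^ (M0 + i) = k ^ (M0 + i) * (y (M0 + i) - 1) - 1 := by omega
    have hw2 : w (q - k ^ (M0 + i)) = (Nat.bodd (M0 + i)).xor (w (y (M0 + i) - 2)) := by
      rw [h6]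
      have := chain2 w hk H1 (M0 + i) (y (M0 + i) - 1) (by omega)
      rwa [show y (M0 + i) - 1 - 1 = y (M0 + i) - 2 by omega] at this
    have hrefl : w (k ^ (M0 + i)) = w (q - k ^ (M0 + i)) :=
      reflw w hk hr H1 Refl _ (le_trans hkM (Nat.pow_le_pow_right hk0 (by omega))) hjq
    have hcomb : (Nat.bodd i).xor (w (k ^ M0))
        = (Nat.bodd (M0 + i)).xor (w (y (M0 + i) - 2)) := by
      rw [← hw1, ← hw2]; exact hrefl
    have hsolve : ∀ a b c : Bool, c = a.xor b → b = a.xor c := by decide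
    exact hsolve _ _ _ hcomb
  have e0 := wtop 0 (by omega)
  have e1 := wtop 1 (by omega)
  simp only [Nat.add_zero] at e0
  have g1 : w (y M0 - 2) = w (y (M0 + 1) - 2) := by
    rw [e0, e1]
    simp only [Nat.bodd_succ, Nat.bodd_one, Nat.bodd_zero]
    cases Nat.bodd M0 <;> cases w (k ^ M0) <;> rfl
  have f0 := wpred M0 (by omega)
  have f1 := wpred (M0 + 1) (by omega)
  have f2 := wZ (M0 + 1) (by omega)
  have hne : (!w (y (M0 + 1) - 1)) = !w (y (M0 + 1 + 1) - 1) := by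
    rw [← f0, ← f1]; exact g1
  have h2 := Bool.not_inj hne
  rw [f2] at h2
  exact absurd h2 (by cases w (y (M0 + 1 + 1) - 1) <;> simp)

theorem core (hk : 2 ≤ k) (hM : 1 ≤ M0) {q r : ℕ} (hr : r < k)
    (H1 : ∀ m, M0 ≤ m → w m = !w (m / k))
    (Refl : ∀ j, j ≤ q → w (r + k * j) = !w (q - j))
    (hq : k ^ (M0 + 2) * (2 * k ^ 2 * (M0 + 3) + 2) ≤ q + 1) : False := by
  have hk0 : 0 < k := by omega
  by_cases hdvd : k ^ (M0 + 2) ∣ q + 1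
  · exact stuckCase w hk hM hr H1 Refl hdvd hq
  · set s := Nat.findGreatest (fun t => k ^ t ∣ q + 1) (M0 + 2) with hs
    have hsle : s ≤ M0 + 2 := Nat.findGreatest_le _
    have hPs : k ^ s ∣ q + 1 :=
      Nat.findGreatest_spec (P := fun t => k ^ t ∣ q + 1) (m := 0) (Nat.zero_le _) (by simp)
    have hsne : s ≠ M0 + 2 := by
      intro h
      rw [h] at hPs
      exact hdvd hPs
    have hnot : ¬ k ^ (s + 1) ∣ q + 1 :=
      Nat.findGreatest_is_greatest (P := fun t => k ^ t ∣ q + 1) (n := M0 + 2)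
        (by omega) (by omega)
    set y := (q + 1) / k ^ s with hy
    have hqy : q + 1 = k ^ s * y := (Nat.mul_div_cancel' hPs).symm
    have hy0 : 0 < y := by
      rcases Nat.eq_zero_or_pos y with h | h
      · rw [h, Nat.mul_zero] at hqy; omega
      · exact h
    have hky : ¬ k ∣ y := by
      rintro ⟨c, hc⟩
      exact hnot ⟨c, by rw [pow_succ, hqy, hc]; ring⟩
    have hZmod : ¬ k ∣ (y - 1) + 1 := by
      rwa [Nat.sub_add_cancel hy0]
    have hyB : 2 * k ^ 2 * (M0 + 3) + 2 ≤ y := by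
      have h1 : (q + 1) / k ^ (M0 + 2) ≤ (q + 1) / k ^ s :=
        Nat.div_le_div_left (Nat.pow_le_pow_right hk0 hsle) (Nat.pow_pos hk0)
      have h2 : 2 * k ^ 2 * (M0 + 3) + 2 ≤ (q + 1) / k ^ (M0 + 2) :=
        (Nat.le_div_iff_mul_le (Nat.pow_pos hk0)).2 (by rw [mul_comm]; exact hq)
      omega
    have reflZ : ∀ x, M0 ≤ x → x + M0 + 1 ≤ (y - 1) + 1 → w x = w ((y - 1) - x) := by
      intro x hx hxy
      have := lift w hk hr H1 Refl s x hPs hx (by omega)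
      rwa [← hy] at this
    exact goodCase w hk hM H1 (y - 1) (by omega) hZmod reflZ

end Core


lemma decide_not_iff (P Q : Prop) [Decidable P] [Decidable Q] (h : P ↔ ¬Q) :
    decide P = !decide Q := by
  by_cases hq : Q
  · have hp : ¬P := by tauto
    simp [hp, hq]
  · have hp : P := by tauto
    simp [hp, hq]

end Stmt4Aux

open Stmt4Aux in
open Finset in
theorem stmt_4 (k : ℕ) (hk : 2 ≤ k) (A : Set ℕ)
    (hA : ∀ᶠ n in Filter.atTop, weightedRep A k n = weightedRep Aᶜ k n) :
    ∀ᶠ n in Filter.atTop, 1 ≤ weightedRep A k n := by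
  have hk0 : 0 < k := by omega
  have hk1 : 1 ≤ k := by omega
  letI : DecidablePred (· ∈ A) := Classical.decPred _
  letI : DecidablePred (· ∈ Aᶜ) := Classical.decPred _
  obtain ⟨N, hN⟩ := Filter.eventually_atTop.1 hA
  set M0 := N + k + 2 with hM0def
  have hM : 1 ≤ M0 := by omega
  -- derive the counting identity for all n ≥ N
  have hkey : ∀ n, N ≤ n →
      ((range (n / k + 1)).filter (fun b => b ∈ A)).card
        + ((range (n / k + 1)).filter (fun b => n - k * b ∈ A)).card = n / k + 1 := by
    intro n hn
    apply key_identity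
    rw [← wr_card A k n hk1, ← wr_card Aᶜ k n hk1]
    exact hN n hn
  -- the division-step property
  have H1prop : ∀ m, M0 ≤ m → ((m ∈ A) ↔ ¬ (m / k ∈ A)) := by
    intro m hm
    have hmk : k ≤ m := by omega
    have hstep := step_identity A k (m - k) hk1
      (hkey (m - k) (by omega)) (by
        rw [show m - k + k = m by omega]
        exact hkey m (by omega))
    rw [show m - k + k = m by omega] at hstep
    rwa [show (m - k) / k + 1 = m / k by
      have := Nat.add_div_right (m - k) hk0
      rw [show m - k + k = m by omega] at this
      omega] at hstep
  set w : ℕ → Bool := fun m => decide (m ∈ A) with hw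
  have H1bool : ∀ m, M0 ≤ m → w m = !w (m / k) :=
    fun m hm => decide_not_iff _ _ (H1prop m hm)
  rw [Filter.eventually_atTop]
  refine ⟨max N (k * (k ^ (M0 + 2) * (2 * k ^ 2 * (M0 + 3) + 2))), fun n hn => ?_⟩
  by_contra hcon
  have h0 : weightedRep A k n = 0 := by omega
  have h0' : weightedRep Aᶜ k n = 0 := by
    rw [← hN n (le_trans (le_max_left _ _) hn)]
    exact h0
  have hcA := (wr_card A k n hk1).symm.trans h0
  have hcB := (wr_card Aᶜ k n hk1).symm.trans h0'
  have hnA : ∀ b, b ≤ n / k → ¬(n - k * b ∈ A ∧ b ∈ A) := by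
    intro b hb
    exact Finset.filter_eq_empty_iff.1 (Finset.card_eq_zero.1 hcA)
      (Finset.mem_range.2 (by omega))
  have hnB : ∀ b, b ≤ n / k → ¬(n - k * b ∈ Aᶜ ∧ b ∈ Aᶜ) := by
    intro b hb
    exact Finset.filter_eq_empty_iff.1 (Finset.card_eq_zero.1 hcB)
      (Finset.mem_range.2 (by omega))
  have hr : n % k < k := Nat.mod_lt _ hk0
  have Reflbool : ∀ j, j ≤ n / k → w (n % k + k * j) = !w (n / k - j) := by
    intro j hj
    have hb : n / k - j ≤ n / k := by omega
    have h1 := hnA (n / k - j) hb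
    have h2 := hnB (n / k - j) hb
    simp only [Set.mem_compl_iff] at h2
    have hdm := Nat.div_add_mod n k
    have hmul : k * (n / k - j) + k * j = k * (n / k) := by
      rw [← Nat.mul_add]; congr 1; omega
    have heq : n - k * (n / k - j) = n % k + k * j := by omega
    rw [heq] at h1 h2
    exact decide_not_iff _ _ (by tauto)
  have hq : k ^ (M0 + 2) * (2 * k ^ 2 * (M0 + 3) + 2) ≤ n / k + 1 := by
    have h1 : k * (k ^ (M0 + 2) * (2 * k ^ 2 * (M0 + 3) + 2)) ≤ n :=
      le_trans (le_max_right _ _) hn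
    have h2 : k ^ (M0 + 2) * (2 * k ^ 2 * (M0 + 3) + 2) ≤ n / k :=
      (Nat.le_div_iff_mul_le hk0).2 (by rw [mul_comm]; exact h1)
    omega
  exact core w hk hM hr H1bool Reflbool hq
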